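/- Let t1, t2 : ℕ → ℝ satisfy t1(m) ≠ 0 and t2(m) ≠ 0 for all m ≥ 1, and suppose there exist M ≥ 1 and nonzero reals t1∞, t2∞ with |t1∞| < |t2∞| such that t1(m) = t1∞ and t2(m) = t2∞ for all m ≥ M. Define ψ : ℕ → ℂ² by ψ_0 = 0 and, for m ≥ 1, ψ_m = ( ∏_{j=1}^{m−1} (−t1(j)/t2(j)), 0 ). Then ψ is not identically zero, ∑_{m≥1} ‖ψ_m‖² < ∞, and for every m ≥ 1 one has A(m−1)ᵀ ψ_{m−1} + V(m) ψ_m + A(m) ψ_{m+1} = 0. In particular, 0 is an eigenvalue of the SSH edge Hamiltonian with an ℓ² eigenvector (edge state) ψ. -/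
import Mathlib


open Matrix in
/-- Existence of the zero-energy edge state of the SSH edge Hamiltonian (with zero onsite
potentials) when `|t1∞| < |t2∞|`: the explicitly given sequence `ψ` is a nonzero square-summable
solution of `A(m-1)ᵀ ψ_{m-1} + V(m) ψ_m + A(m) ψ_{m+1} = 0` for all `m ≥ 1`. -/
theorem stmt_2 (t1 t2 : ℕ → ℝ)
    (h1 : ∀ m, 1 ≤ m → t1 m ≠ 0) (h2 : ∀ m, 1 ≤ m → t2 m ≠ 0)
    (M : ℕ) (hM : 1 ≤ M) (t1i t2i : ℝ) (ht1 : t1i ≠ 0) (ht2 : t2i ≠ 0)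
    (hlt : |t1i| < |t2i|)
    (he1 : ∀ m, M ≤ m → t1 m = t1i) (he2 : ∀ m, M ≤ m → t2 m = t2i)
    (ψ : ℕ → Fin 2 → ℂ)
    (hψ0 : ψ 0 = 0)
    (hψ : ∀ m, 1 ≤ m → ψ m = fun i =>
      if i = 0 then ∏ j ∈ Finset.Ico 1 m, (-(t1 j : ℂ) / (t2 j : ℂ)) else 0) :
    ψ ≠ 0 ∧
    Summable (fun m : ℕ => ‖ψ m 0‖ ^ 2 + ‖ψ m 1‖ ^ 2) ∧
    ∀ m, 1 ≤ m →
      (!![(0 : ℂ), 0; (t2 (m - 1) : ℂ), 0])ᵀ.mulVec (ψ (m - 1)) +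
        (!![(0 : ℂ), (t1 m : ℂ); (t1 m : ℂ), 0]).mulVec (ψ m) +
        (!![(0 : ℂ), 0; (t2 m : ℂ), 0]).mulVec (ψ (m + 1)) = 0 := by
  have hψ1 : ∀ m, ψ m 1 = 0 := by
    intro m
    rcases Nat.eq_zero_or_pos m with h | h
    · simp [h, hψ0]
    · rw [hψ m h]; simp
  refine ⟨?_, ?_, ?_⟩
  · intro h
    have h1' := congrFun (congrFun h 1) 0
    rw [hψ 1 le_rfl] at h1'
    simp at h1'
  · rw [← summable_nat_add_iff M]
    set r : ℝ := |t1i| / |t2i| with hr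
    set C : ℝ := ∏ j ∈ Finset.Ico 1 M, ‖(-(t1 j : ℂ) / (t2 j : ℂ))‖ with hC
    have hr0 : 0 ≤ r := div_nonneg (abs_nonneg _) (abs_nonneg _)
    have hr1 : r < 1 := (div_lt_one (abs_pos.mpr ht2)).mpr hlt
    have key : ∀ n : ℕ, ‖ψ (n + M) 0‖ ^ 2 + ‖ψ (n + M) 1‖ ^ 2 = C ^ 2 * (r ^ 2) ^ n := by
      intro n
      have e0 : ψ (n + M) 0 = ∏ j ∈ Finset.Ico 1 (n + M), (-(t1 j : ℂ) / (t2 j : ℂ)) := by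
        rw [hψ (n + M) (by omega)]; simp
      rw [e0, hψ1, norm_prod]
      have hsplit : (∏ j ∈ Finset.Ico 1 M, ‖(-(t1 j : ℂ) / (t2 j : ℂ))‖) *
          (∏ j ∈ Finset.Ico M (n + M), ‖(-(t1 j : ℂ) / (t2 j : ℂ))‖) =
          ∏ j ∈ Finset.Ico 1 (n + M), ‖(-(t1 j : ℂ) / (t2 j : ℂ))‖ :=
        Finset.prod_Ico_consecutive _ hM (Nat.le_add_left M n)
      rw [← hsplit]
      have htail : ∏ j ∈ Finset.Ico M (n + M), ‖(-(t1 j : ℂ) / (t2 j : ℂ))‖ = r ^ n := by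
        rw [Finset.prod_congr rfl (fun j hj => ?_), Finset.prod_const, Nat.card_Ico]
        · congr 1; omega
        · have hjM : M ≤ j := (Finset.mem_Ico.mp hj).1
          rw [he1 j hjM, he2 j hjM]
          simp [norm_div, Complex.norm_real, hr]
      rw [htail, norm_zero, ← hC]
      ring
    rw [funext key]
    exact (summable_geometric_of_lt_one (by positivity) (by nlinarith)).mul_left _
  · intro m hm
    have e1 : ψ m 0 = ∏ j ∈ Finset.Ico 1 m, (-(t1 j : ℂ) / (t2 j : ℂ)) := by
      rw [hψ m hm]; simp
    have e2 : ψ (m + 1) 0 = ∏ j ∈ Finset.Ico 1 (m + 1), (-(t1 j : ℂ) / (t2 j : ℂ)) := by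
      rw [hψ (m + 1) (by omega)]; simp
    have hprod : (∏ j ∈ Finset.Ico 1 (m + 1), (-(t1 j : ℂ) / (t2 j : ℂ))) =
        (∏ j ∈ Finset.Ico 1 m, (-(t1 j : ℂ) / (t2 j : ℂ))) * (-(t1 m : ℂ) / (t2 m : ℂ)) :=
      Finset.prod_Ico_succ_top hm _
    have ht2m : (t2 m : ℂ) ≠ 0 := by exact_mod_cast h2 m hm
    have hT : (!![(0 : ℂ), 0; (t2 (m - 1) : ℂ), 0])ᵀ = !![(0 : ℂ), (t2 (m - 1) : ℂ); 0, 0] := by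
      ext i j; fin_cases i <;> fin_cases j <;> rfl
    have key : (t1 m : ℂ) * ψ m 0 + (t2 m : ℂ) * ψ (m + 1) 0 = 0 := by
      rw [e1, e2, hprod, mul_comm ((t2 m : ℂ)), mul_assoc, div_mul_cancel₀ _ ht2m]
      ring
    funext i
    fin_cases i <;>
      simp [hT, Matrix.mulVec, dotProduct, Fin.sum_univ_two, hψ1]
    linear_combination key
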